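/- For z a positive definite r×r real symmetric matrix, the determinant of the linear map y ↦ z^{1/2} y z^{1/2} on the space Sym(r,ℝ) equals (det z)^{(r+1)/2}; in particular, with n = r(r+1)/2, it equals (det z)^{n/r}. -/

import Mathlib

open Matrix
open scoped Classical

/-- The space `Sym(r,ℝ)` of symmetric matrices, as a submodule of the matrices. -/
def SymMat (r : ℕ) : Submodule ℝ (Matrix (Fin r) (Fin r) ℝ) where
  carrier := {A | A.IsSymm}
  add_mem' ha hb := ha.add hb
  zero_mem' := Matrix.isSymm_zero
  smul_mem' c A hA := hA.smul c

/-- The square root of a positive semidefinite matrix (junk value `0` otherwise). -/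
noncomputable def msqrt {r : ℕ} (A : Matrix (Fin r) (Fin r) ℝ) : Matrix (Fin r) (Fin r) ℝ :=
  if h : A.PosSemidef then
    (h.1.eigenvectorUnitary : Matrix (Fin r) (Fin r) ℝ) *
      diagonal ((↑) ∘ (√·) ∘ h.1.eigenvalues) *
      (star h.1.eigenvectorUnitary : Matrix (Fin r) (Fin r) ℝ)
  else 0

lemma msqrt_isSymm {r : ℕ} (A : Matrix (Fin r) (Fin r) ℝ) : (msqrt A).IsSymm := by
  unfold msqrt
  split
  · rename_i h
    show (_ * _ * _)ᵀ = _
    rw [Matrix.transpose_mul, Matrix.transpose_mul, Matrix.diagonal_transpose, Matrix.mul_assoc]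
    simp [Matrix.star_eq_conjTranspose]
  · exact Matrix.isSymm_zero

lemma congr_isSymm {r : ℕ} {s v : Matrix (Fin r) (Fin r) ℝ} (hs : s.IsSymm) (hv : v.IsSymm) :
    (s * v * s).IsSymm := by
  show (s * v * s)ᵀ = s * v * s
  rw [Matrix.transpose_mul, Matrix.transpose_mul, hs.eq, hv.eq, Matrix.mul_assoc]

/-- The linear endomorphism `y ↦ z^{1/2} y z^{1/2}` of `Sym(r,ℝ)`. -/
noncomputable def congrSqrtMap (r : ℕ) (z : Matrix (Fin r) (Fin r) ℝ) :
    SymMat r →ₗ[ℝ] SymMat r where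
  toFun y := ⟨msqrt z * (y : Matrix (Fin r) (Fin r) ℝ) * msqrt z,
    congr_isSymm (msqrt_isSymm z) y.2⟩
  map_add' y₁ y₂ := by
    apply Subtype.ext
    simp [Matrix.mul_add, Matrix.add_mul]
  map_smul' c y := by
    apply Subtype.ext
    simp [Matrix.mul_smul, Matrix.smul_mul]

/-- Congruence map `y ↦ a y aᵀ` on symmetric matrices. -/
noncomputable def congrMap (r : ℕ) (a : Matrix (Fin r) (Fin r) ℝ) :
    SymMat r →ₗ[ℝ] SymMat r where
  toFun y := ⟨a * (y : Matrix (Fin r) (Fin r) ℝ) * aᵀ, by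
    show (a * (y : Matrix (Fin r) (Fin r) ℝ) * aᵀ)ᵀ = _
    rw [Matrix.transpose_mul, Matrix.transpose_mul, Matrix.transpose_transpose,
      y.2.eq, Matrix.mul_assoc]⟩
  map_add' y₁ y₂ := by
    apply Subtype.ext
    simp [Matrix.mul_add, Matrix.add_mul]
  map_smul' c y := by
    apply Subtype.ext
    simp [Matrix.mul_smul, Matrix.smul_mul]

lemma congrMap_mul (r : ℕ) (a b : Matrix (Fin r) (Fin r) ℝ) :
    congrMap r (a * b) = (congrMap r a).comp (congrMap r b) := by
  refine LinearMap.ext fun y => Subtype.ext ?_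
  show ((a * b) * (y : Matrix (Fin r) (Fin r) ℝ) * (a * b)ᵀ : Matrix (Fin r) (Fin r) ℝ)
      = a * (b * (y : Matrix (Fin r) (Fin r) ℝ) * bᵀ) * aᵀ
  rw [Matrix.transpose_mul]
  simp only [Matrix.mul_assoc]

lemma congrMap_one (r : ℕ) : congrMap r 1 = LinearMap.id := by
  refine LinearMap.ext fun y => Subtype.ext ?_
  show ((1 : Matrix (Fin r) (Fin r) ℝ) * (y : Matrix (Fin r) (Fin r) ℝ) * (1 : Matrix (Fin r) (Fin r) ℝ)ᵀ)
      = (y : Matrix (Fin r) (Fin r) ℝ)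
  rw [Matrix.transpose_one, Matrix.one_mul, Matrix.mul_one]

/-- Index type for the basis of symmetric matrices. -/
abbrev SymIdx (r : ℕ) := {p : Fin r × Fin r // p.1 ≤ p.2}

noncomputable def symFam (r : ℕ) (p : SymIdx r) : SymMat r :=
  ⟨Matrix.single p.1.1 p.1.2 (1:ℝ) + Matrix.single p.1.2 p.1.1 (1:ℝ), by
    show _ᵀ = _
    ext k l
    simp [Matrix.transpose_apply, Matrix.single, Matrix.add_apply, and_comm]
    ring⟩

lemma symFam_apply (r : ℕ) (p : SymIdx r) (k l : Fin r) :
    (symFam r p : Matrix (Fin r) (Fin r) ℝ) k l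
      = (if p.1.1 = k ∧ p.1.2 = l then (1:ℝ) else 0)
        + (if p.1.2 = k ∧ p.1.1 = l then (1:ℝ) else 0) := rfl

lemma symFam_apply_self (r : ℕ) (p : SymIdx r) :
    (symFam r p : Matrix (Fin r) (Fin r) ℝ) p.1.1 p.1.2
      = if p.1.1 = p.1.2 then (2:ℝ) else 1 := by
  rw [symFam_apply]
  by_cases h : p.1.1 = p.1.2
  · simp [h]
    norm_num
  · have h' : ¬ p.1.2 = p.1.1 := fun hh => h hh.symm
    simp [h, h']

lemma symFam_apply_ne (r : ℕ) (p q : SymIdx r) (hq : q ≠ p) :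
    (symFam r q : Matrix (Fin r) (Fin r) ℝ) p.1.1 p.1.2 = 0 := by
  rw [symFam_apply]
  have h1 : ¬(q.1.1 = p.1.1 ∧ q.1.2 = p.1.2) := by
    rintro ⟨h, h'⟩
    exact hq (Subtype.ext (Prod.ext h h'))
  have h2 : ¬(q.1.2 = p.1.1 ∧ q.1.1 = p.1.2) := by
    rintro ⟨h, h'⟩
    have hq2 := q.2
    have hp2 := p.2
    rw [h, h'] at hq2
    have : p.1.1 = p.1.2 := le_antisymm hp2 hq2
    apply hq; apply Subtype.ext; apply Prod.ext
    · exact h'.trans this.symm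
    · exact h.trans this
  simp [h1, h2]

lemma symFam_linearIndependent (r : ℕ) : LinearIndependent ℝ (symFam r) := by
  rw [linearIndependent_iff']
  intro s g hsum p hp
  have h := congrArg (fun v : SymMat r => (v : Matrix (Fin r) (Fin r) ℝ) p.1.1 p.1.2) hsum
  simp only [Submodule.coe_sum, SetLike.val_smul, Matrix.sum_apply, Matrix.smul_apply,
    ZeroMemClass.coe_zero, Matrix.zero_apply, smul_eq_mul] at h
  rw [Finset.sum_eq_single p (fun q _ hq => by rw [symFam_apply_ne r p q hq, mul_zero])
    (fun h' => (h' hp).elim)] at h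
  rw [symFam_apply_self] at h
  by_cases hd : p.1.1 = p.1.2 <;> simp [hd] at h <;> tauto

lemma symFam_repr (r : ℕ) (A : SymMat r) :
    A = ∑ p : SymIdx r,
      (if p.1.1 = p.1.2 then (A : Matrix (Fin r) (Fin r) ℝ) p.1.1 p.1.2 / 2
        else (A : Matrix (Fin r) (Fin r) ℝ) p.1.1 p.1.2) • symFam r p := by
  apply Subtype.ext
  ext k l
  rw [show ((∑ p : SymIdx r, _ • symFam r p : SymMat r) : Matrix (Fin r) (Fin r) ℝ) k l
      = ∑ p : SymIdx r, (if p.1.1 = p.1.2 then (A : Matrix (Fin r) (Fin r) ℝ) p.1.1 p.1.2 / 2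
        else (A : Matrix (Fin r) (Fin r) ℝ) p.1.1 p.1.2)
        * (symFam r p : Matrix (Fin r) (Fin r) ℝ) k l by
    simp only [Submodule.coe_sum, Matrix.sum_apply]
    refine Finset.sum_congr rfl fun p _ => ?_
    split <;> simp]
  rcases le_or_gt k l with hkl | hlk
  · rw [Finset.sum_eq_single (⟨(k, l), hkl⟩ : SymIdx r)]
    · rw [symFam_apply]
      by_cases h : k = l
      · subst h; norm_num
      · simp [h, fun hh : l = k => h hh.symm]
    · intro q _ hq
      rw [symFam_apply]
      have h1 : ¬(q.1.1 = k ∧ q.1.2 = l) := by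
        rintro ⟨h, h'⟩
        exact hq (Subtype.ext (Prod.ext h h'))
      have h2 : ¬(q.1.2 = k ∧ q.1.1 = l) := by
        rintro ⟨h, h'⟩
        have hq2 := q.2
        rw [h', h] at hq2
        have hkl' : k = l := le_antisymm hkl hq2
        exact hq (Subtype.ext (Prod.ext (h'.trans hkl'.symm) (h.trans hkl')))
      simp [h1, h2]
    · simp
  · rw [Finset.sum_eq_single (⟨(l, k), hlk.le⟩ : SymIdx r)]
    · rw [symFam_apply]
      have h : ¬ l = k := fun hh => absurd hh.ge (not_le.mpr hlk)
      have h1 : ¬(l = k ∧ k = l) := fun hh => h hh.1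
      simp [h, h1]
      exact (congrFun (congrFun A.2.eq k) l).symm
    · intro q _ hq
      rw [symFam_apply]
      have h1 : ¬(q.1.1 = k ∧ q.1.2 = l) := by
        rintro ⟨h, h'⟩
        have hq2 := q.2
        rw [h, h'] at hq2
        exact absurd hq2 (not_le.mpr hlk)
      have h2 : ¬(q.1.2 = k ∧ q.1.1 = l) := by
        rintro ⟨h, h'⟩
        exact hq (Subtype.ext (Prod.ext h' h))
      simp [h1, h2]
    · simp

/-- The basis of `Sym(r,ℝ)`. -/
noncomputable def symBasis (r : ℕ) : Module.Basis (SymIdx r) ℝ (SymMat r) :=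
  Module.Basis.mk (symFam_linearIndependent r) (by
    intro A _
    rw [symFam_repr r A]
    exact Submodule.sum_mem _ fun p _ =>
      Submodule.smul_mem _ _ (Submodule.subset_span ⟨p, rfl⟩))

lemma diag_congr_std (r : ℕ) (d : Fin r → ℝ) (i j : Fin r) :
    diagonal d * Matrix.single i j (1:ℝ) * (diagonal d)ᵀ
      = (d i * d j) • Matrix.single i j 1 := by
  rw [diagonal_transpose]
  ext k l
  by_cases h : i = k ∧ j = l
  · obtain ⟨rfl, rfl⟩ := h
    simp [diagonal_mul, mul_diagonal, Matrix.single, Matrix.smul_apply, mul_comm]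
  · simp [diagonal_mul, mul_diagonal, Matrix.single, Matrix.smul_apply, h]

lemma congrMap_diagonal_apply (r : ℕ) (d : Fin r → ℝ) (p : SymIdx r) :
    congrMap r (diagonal d) (symFam r p) = (d p.1.1 * d p.1.2) • symFam r p := by
  apply Subtype.ext
  show diagonal d * (symFam r p : Matrix (Fin r) (Fin r) ℝ) * (diagonal d)ᵀ = _
  show diagonal d * (Matrix.single p.1.1 p.1.2 (1:ℝ) + Matrix.single p.1.2 p.1.1 (1:ℝ))
      * (diagonal d)ᵀ = _
  rw [Matrix.mul_add, Matrix.add_mul, diag_congr_std, diag_congr_std]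
  show _ = (d p.1.1 * d p.1.2) • (Matrix.single p.1.1 p.1.2 (1:ℝ) + Matrix.single p.1.2 p.1.1 (1:ℝ))
  rw [smul_add, mul_comm (d p.1.2) (d p.1.1)]

lemma det_congrMap_diagonal (r : ℕ) (d : Fin r → ℝ) :
    LinearMap.det (congrMap r (diagonal d)) = ∏ p : SymIdx r, d p.1.1 * d p.1.2 := by
  rw [← LinearMap.det_toMatrix (symBasis r)]
  have hmat : LinearMap.toMatrix (symBasis r) (symBasis r) (congrMap r (diagonal d))
      = Matrix.diagonal (fun p : SymIdx r => d p.1.1 * d p.1.2) := by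
    ext p q
    rw [LinearMap.toMatrix_apply]
    simp only [symBasis, Module.Basis.mk_apply]
    rw [congrMap_diagonal_apply, LinearEquiv.map_smul]
    rw [show (Module.Basis.mk (symFam_linearIndependent r) _).repr (symFam r q)
        = Finsupp.single q 1 by
      conv_lhs => rw [show symFam r q = (Module.Basis.mk (symFam_linearIndependent r)
        (by intro A _
            rw [symFam_repr r A]
            exact Submodule.sum_mem _ fun p _ =>
              Submodule.smul_mem _ _ (Submodule.subset_span ⟨p, rfl⟩)) : Module.Basis (SymIdx r) ℝ (SymMat r)) q
        from (Module.Basis.mk_apply _ _ q).symm]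
      exact Module.Basis.repr_self _ q]
    rw [Matrix.diagonal_apply]
    by_cases h : p = q
    · subst h; simp
    · simp only [Finsupp.smul_apply, Finsupp.single_apply, if_neg (fun hh : q = p => h hh.symm),
        smul_zero, if_neg h]
  rw [hmat, Matrix.det_diagonal]

lemma prod_symIdx (r : ℕ) (d : Fin r → ℝ) (hd : ∀ i, 0 ≤ d i) :
    (∏ p : SymIdx r, d p.1.1 * d p.1.2) = (∏ i, d i) ^ (r + 1) := by
  classical
  set f : Fin r × Fin r → ℝ := fun p => d p.1 * d p.2 with hf
  set S := Finset.univ.filter (fun p : Fin r × Fin r => p.1 ≤ p.2) with hS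
  set S' := Finset.univ.filter (fun p : Fin r × Fin r => p.2 ≤ p.1) with hS'
  have hsub : (∏ p : SymIdx r, d p.1.1 * d p.1.2) = ∏ p ∈ S, f p := by
    rw [Finset.prod_subtype (p := fun p : Fin r × Fin r => p.1 ≤ p.2) S (by simp [hS]) f]
  have hswap : ∏ p ∈ S', f p = ∏ p ∈ S, f p := by
    refine Finset.prod_equiv (Equiv.prodComm (Fin r) (Fin r)) ?_ ?_
    · intro p; simp [hS, hS']
    · intro p _; simp [hf, mul_comm]
  have hunion : S ∪ S' = Finset.univ := by
    ext p; simp [hS, hS', le_total]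
  have hinter : S ∩ S' = Finset.univ.filter (fun p : Fin r × Fin r => p.1 = p.2) := by
    ext p
    simp only [hS, hS', Finset.mem_inter, Finset.mem_filter, Finset.mem_univ, true_and]
    exact ⟨fun ⟨h1, h2⟩ => le_antisymm h1 h2, fun h => ⟨h.le, h.ge⟩⟩
  have huniv : ∏ p ∈ Finset.univ, f p = ((∏ i, d i) ^ r) * ((∏ i, d i) ^ r) := by
    rw [show (Finset.univ : Finset (Fin r × Fin r)) = Finset.univ ×ˢ Finset.univ by
      ext p; simp]
    rw [Finset.prod_product]
    have hx : ∀ x : Fin r, (∏ y : Fin r, f (x, y)) = (d x) ^ r * ∏ i, d i := fun x => by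
      simp [hf, Finset.prod_mul_distrib, Finset.prod_const]
    rw [Finset.prod_congr rfl fun x _ => hx x]
    rw [Finset.prod_mul_distrib, Finset.prod_pow, Finset.prod_const, Finset.card_univ,
      Fintype.card_fin]
  have hdiag : ∏ p ∈ Finset.univ.filter (fun p : Fin r × Fin r => p.1 = p.2), f p
      = (∏ i, d i) * (∏ i, d i) := by
    rw [show Finset.univ.filter (fun p : Fin r × Fin r => p.1 = p.2)
        = Finset.image (fun i : Fin r => (i, i)) Finset.univ by
      ext ⟨a, b⟩
      simp only [Finset.mem_filter, Finset.mem_univ, true_and, Finset.mem_image,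
        Prod.mk.injEq]
      constructor
      · rintro rfl; exact ⟨a, rfl, rfl⟩
      · rintro ⟨i, h1, h2⟩; rw [← h1, ← h2]]
    rw [Finset.prod_image (fun a _ b _ h => by simpa [Prod.ext_iff] using h)]
    rw [← Finset.prod_mul_distrib]
  have key := Finset.prod_union_inter (s₁ := S) (s₂ := S') (f := f)
  rw [hunion, hinter, huniv, hdiag, hswap] at key
  have hP : (0:ℝ) ≤ ∏ p ∈ S, f p :=
    Finset.prod_nonneg fun p _ => mul_nonneg (hd _) (hd _)
  have hQ : (0:ℝ) ≤ (∏ i, d i) ^ (r + 1) :=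
    pow_nonneg (Finset.prod_nonneg fun i _ => hd i) _
  have hsq : (∏ p ∈ S, f p) ^ 2 = ((∏ i, d i) ^ (r + 1)) ^ 2 := by
    rw [sq, sq, ← key]; ring
  rw [hsub, ← Real.sqrt_sq hP, ← Real.sqrt_sq hQ, hsq]

lemma det_congrMap_posSemidef (r : ℕ) (s : Matrix (Fin r) (Fin r) ℝ) (hs : s.PosSemidef) :
    LinearMap.det (congrMap r s) = s.det ^ (r + 1) := by
  have hherm : s.IsHermitian := hs.1
  set U : Matrix (Fin r) (Fin r) ℝ := (hherm.eigenvectorUnitary : Matrix (Fin r) (Fin r) ℝ)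
    with hUdef
  have hsd : s = U * diagonal hherm.eigenvalues * star U := by
    simpa using hherm.spectral_theorem
  have h1 : U * star U = 1 := mem_unitaryGroup_iff.mp hherm.eigenvectorUnitary.2
  have hdetU : LinearMap.det (congrMap r U) * LinearMap.det (congrMap r (star U)) = 1 := by
    rw [← LinearMap.det_comp, ← congrMap_mul, h1, congrMap_one, LinearMap.det_id]
  have hev : s.det = ∏ i, hherm.eigenvalues i := by
    simpa using hherm.det_eq_prod_eigenvalues
  calc LinearMap.det (congrMap r s)
      = LinearMap.det (congrMap r U) * LinearMap.det (congrMap r (diagonal hherm.eigenvalues))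
        * LinearMap.det (congrMap r (star U)) := by
        rw [show congrMap r s = congrMap r (U * diagonal hherm.eigenvalues * star U) from
          congrArg (congrMap r) hsd, congrMap_mul, congrMap_mul, LinearMap.det_comp,
          LinearMap.det_comp]
    _ = LinearMap.det (congrMap r (diagonal hherm.eigenvalues))
        * (LinearMap.det (congrMap r U) * LinearMap.det (congrMap r (star U))) := by ring
    _ = LinearMap.det (congrMap r (diagonal hherm.eigenvalues)) := by rw [hdetU, mul_one]
    _ = ∏ p : SymIdx r, hherm.eigenvalues p.1.1 * hherm.eigenvalues p.1.2 :=
        det_congrMap_diagonal r _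
    _ = (∏ i, hherm.eigenvalues i) ^ (r + 1) :=
        prod_symIdx r _ fun i => hs.eigenvalues_nonneg i
    _ = s.det ^ (r + 1) := by rw [hev]

/-- The determinant of `y ↦ z^{1/2} y z^{1/2}` on `Sym(r,ℝ)` is `(det z)^{(r+1)/2}`,
i.e. `(det z)^{n/r}` with `n = r(r+1)/2`. -/
theorem det_congrSqrtMap (r : ℕ) (z : Matrix (Fin r) (Fin r) ℝ) (hz : z.PosDef) :
    LinearMap.det (congrSqrtMap r z) = z.det ^ (((r:ℝ) + 1) / 2) ∧
    LinearMap.det (congrSqrtMap r z) = z.det ^ (((r * (r + 1) / 2 : ℕ) : ℝ) / (r : ℝ)) := by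
  have hps : z.PosSemidef := hz.posSemidef
  set U : Matrix (Fin r) (Fin r) ℝ := (hps.1.eigenvectorUnitary : Matrix (Fin r) (Fin r) ℝ)
    with hUdef
  have hsdef : msqrt z = U * diagonal (fun i => √(hps.1.eigenvalues i)) * star U := by
    rw [msqrt, dif_pos hps]; rfl
  have hssem : (msqrt z).PosSemidef := by
    rw [hsdef, star_eq_conjTranspose]
    exact (posSemidef_diagonal_iff.mpr fun i => Real.sqrt_nonneg _).mul_mul_conjTranspose_same _
  have hcongr : congrSqrtMap r z = congrMap r (msqrt z) := by
    refine LinearMap.ext fun y => Subtype.ext ?_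
    show msqrt z * (y : Matrix (Fin r) (Fin r) ℝ) * msqrt z
      = msqrt z * (y : Matrix (Fin r) (Fin r) ℝ) * (msqrt z)ᵀ
    rw [(msqrt_isSymm z).eq]
  have hzdet : 0 < z.det := hz.det_pos
  have hsq : (msqrt z).det ^ 2 = z.det := by
    have hzs : z = U * diagonal hps.1.eigenvalues * star U := by
      simpa using hps.1.spectral_theorem
    have hSU : star U * U = 1 := mem_unitaryGroup_iff'.mp hps.1.eigenvectorUnitary.2
    rw [sq, ← Matrix.det_mul, hsdef]
    congr 1
    conv_rhs => rw [hzs]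
    simp only [Matrix.mul_assoc]
    rw [← Matrix.mul_assoc (star U) U, hSU, Matrix.one_mul, ← Matrix.mul_assoc (diagonal _),
      diagonal_mul_diagonal]
    congr 3
    funext i
    exact Real.mul_self_sqrt (hps.eigenvalues_nonneg i)
  have hnn : 0 ≤ (msqrt z).det := by
    rw [show (msqrt z).det = ∏ i, hssem.1.eigenvalues i from by
      simpa using hssem.1.det_eq_prod_eigenvalues]
    exact Finset.prod_nonneg fun i _ => hssem.eigenvalues_nonneg i
  have hms : (msqrt z).det = z.det ^ ((1:ℝ)/2) := by
    rw [← Real.sqrt_eq_rpow, ← hsq, Real.sqrt_sq hnn]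
  have h1 : LinearMap.det (congrSqrtMap r z) = z.det ^ (((r:ℝ) + 1) / 2) := by
    rw [hcongr, det_congrMap_posSemidef r _ hssem, hms,
      ← Real.rpow_natCast (z.det ^ ((1:ℝ)/2)) (r+1), ← Real.rpow_mul hzdet.le]
    congr 1
    push_cast
    ring
  refine ⟨h1, ?_⟩
  rcases Nat.eq_zero_or_pos r with hr | hr
  · subst hr
    rw [h1]
    norm_num [Matrix.det_fin_zero, Real.one_rpow]
  · rw [h1]
    congr 1
    have hdvd : 2 ∣ r * (r + 1) := (Nat.even_mul_succ_self r).two_dvd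
    have h2 : ((r * (r + 1) / 2 : ℕ) : ℝ) = (r:ℝ) * ((r:ℝ) + 1) / 2 := by
      rw [Nat.cast_div hdvd (by norm_num)]
      push_cast
      ring
    rw [h2]
    have hr0 : (r:ℝ) ≠ 0 := Nat.cast_ne_zero.mpr hr.ne'
    field_simp
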